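/- Assume B ≠ ∅. Then the weak*-closure of the barrier cone of B equals the weak*-closed convex cone generated by ⋃_{i∈I} dom f_i*, i.e. w*-cl(barr B) = w*-cl cone(⋃_{i∈I} dom f_i*). -/

import Mathlib

open Pointwise Topology Filter Set

noncomputable section

variable {X : Type*} [AddCommGroup X] [Module ℝ X] [TopologicalSpace X]

/-- Fenchel conjugate, as a function on the weak-* dual. -/
def conjFn (h : X → EReal) : WeakDual ℝ X → EReal :=
  fun p => ⨆ x : X, (p x : EReal) - h x

/-- Epigraph of an extended-real-valued function. -/
def epiFn {V : Type*} (h : V → EReal) : Set (V × ℝ) :=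
  {q | h q.1 ≤ (q.2 : EReal)}

/-- Graph of an extended-real-valued function (where it is finite). -/
def gphFn {V : Type*} (h : V → EReal) : Set (V × ℝ) :=
  {q | h q.1 = (q.2 : EReal)}

/-- Effective domain. -/
def domFn {V : Type*} (h : V → EReal) : Set V :=
  {x | h x < ⊤}

open Classical in
/-- Indicator function of a set. -/
def indicatorE {V : Type*} (D : Set V) : V → EReal :=
  fun x => if x ∈ D then (0 : EReal) else ⊤

/-- Convex cone generated by `D ∪ {0}`. -/
def coneGen {V : Type*} [AddCommGroup V] [Module ℝ V] (D : Set V) : Set V :=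
  {0} ∪ {y | ∃ t : ℝ, 0 ≤ t ∧ ∃ x ∈ convexHull ℝ D, y = t • x}

/-- `h ∈ Γ(X)`: proper, convex and lower semicontinuous. -/
def InGamma (h : X → EReal) : Prop :=
  (∀ x, h x ≠ ⊥) ∧ (∃ x, h x ≠ ⊤) ∧
    Convex ℝ {q : X × ℝ | h q.1 ≤ (q.2 : EReal)} ∧ LowerSemicontinuous h

/-- Solution set `A` of the system `σ = {f i x ≤ 0, i ∈ I; x ∈ C}`. -/
def solSet {I : Type*} (C : Set X) (f : I → X → EReal) : Set X :=
  {x | x ∈ C ∧ ∀ i, f i x ≤ (0 : EReal)}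

/-- Characteristic cone `K = cone (epi δ_C* ∪ ⋃ i, epi f_i*)` of the system. -/
def charCone {I : Type*} (C : Set X) (f : I → X → EReal) : Set (WeakDual ℝ X × ℝ) :=
  coneGen (epiFn (conjFn (indicatorE C)) ∪ ⋃ i, epiFn (conjFn (f i)))

/-- Barrier cone `barr C = dom δ_C*`. -/
def barCone (C : Set X) : Set (WeakDual ℝ X) :=
  domFn (conjFn (indicatorE C))

/-- The Farkas–Minkowski constraint qualification. -/
def IsFM {I : Type*} (C : Set X) (f : I → X → EReal) : Prop :=
  (solSet C f).Nonempty ∧ IsClosed (charCone C f)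

/-- Recession function `h^∞ = δ*_{dom h*}`. -/
def recFn (h : X → EReal) : X → EReal :=
  fun x => ⨆ q ∈ domFn (conjFn h), ((q x : ℝ) : EReal)

/-- Recession cone `D^∞ = ⋂_{t>0} t (D - a)`, for any `a ∈ D`. -/
def recCone (D : Set X) : Set X :=
  {d | ∀ a ∈ D, ∀ t : ℝ, 0 < t → d ∈ t • (D - ({a} : Set X))}

/-- Subdifferential of `h` at `a`. -/
def subdiff (h : X → EReal) (a : X) : Set (WeakDual ℝ X) :=
  {p | (∃ r : ℝ, h a = (r : EReal)) ∧ ∀ x, h a + ((p (x - a) : ℝ) : EReal) ≤ h x}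

set_option linter.unusedSectionVars false

section AuxLemmas

-- ## auxiliary
instance : LocallyConvexSpace ℝ (WeakDual ℝ X) :=
  WeakBilin.locallyConvexSpace (B := topDualPairing ℝ X)

/-- view a continuous linear functional as an element of the weak dual -/
def toWD (g : X →L[ℝ] ℝ) : WeakDual ℝ X := g

@[simp] lemma toWD_apply (g : X →L[ℝ] ℝ) (x : X) : toWD g x = g x := rfl

/-- evaluation at a point as a linear functional on the weak dual -/
def evalLM (x : X) : WeakDual ℝ X →ₗ[ℝ] ℝ where
  toFun q := q x
  map_add' _ _ := rfl
  map_smul' _ _ := rfl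

@[simp] lemma evalLM_apply (x : X) (q : WeakDual ℝ X) : evalLM x q = q x := rfl

/-- every continuous linear functional on the weak-* dual is an evaluation -/
theorem weakdual_eval (φ : WeakDual ℝ X →L[ℝ] ℝ) : ∃ d : X, ∀ q : WeakDual ℝ X, φ q = q d := by
  classical
  set ι : WeakDual ℝ X → (X → ℝ) := fun q x => q x with hι
  have he : IsEmbedding ι :=
    WeakBilin.isEmbedding (B := topDualPairing ℝ X) ContinuousLinearMap.coe_injective
  have h1 : φ ⁻¹' (Set.Ioo (-1 : ℝ) 1) ∈ 𝓝 (0 : WeakDual ℝ X) := by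
    refine φ.continuous.continuousAt.preimage_mem_nhds ?_
    have : φ 0 = 0 := map_zero φ
    rw [this]
    exact isOpen_Ioo.mem_nhds (by norm_num)
  rw [he.toIsInducing.nhds_eq_comap, Filter.mem_comap] at h1
  obtain ⟨V, hV, hVsub⟩ := h1
  rw [nhds_pi, Filter.mem_pi] at hV
  obtain ⟨J, hJfin, t, ht, hpi⟩ := hV
  have h0 : ∀ x : X, ι 0 x = 0 := fun x => rfl
  have key : ∀ q : WeakDual ℝ X, (∀ x ∈ J, q x = 0) → φ q = 0 := by
    intro q hq
    by_contra hne
    have hmem : ∀ c : ℝ, c • q ∈ φ ⁻¹' (Set.Ioo (-1 : ℝ) 1) := by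
      intro c
      apply hVsub
      apply hpi
      intro x hx
      have h2 : ι (c • q) x = c * q x := rfl
      rw [h2, hq x hx, mul_zero]
      have := mem_of_mem_nhds (ht x)
      rwa [h0 x] at this
    have habs := hmem (2 / φ q)
    simp only [Set.mem_preimage, Set.mem_Ioo, map_smul, smul_eq_mul] at habs
    rw [div_mul_cancel₀ _ hne] at habs
    linarith [habs.2]
  haveI : Finite J := hJfin.to_subtype
  have hker : ⨅ x : J, LinearMap.ker (evalLM (x : X)) ≤ LinearMap.ker (φ : WeakDual ℝ X →ₗ[ℝ] ℝ) := by
    intro q hq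
    rw [Submodule.mem_iInf] at hq
    have : ∀ x ∈ J, q x = 0 := fun x hx => hq ⟨x, hx⟩
    exact key q this
  have hspan := mem_span_of_iInf_ker_le_ker (𝕜 := ℝ) hker
  haveI := hJfin.fintype
  obtain ⟨c, hc⟩ := (Submodule.mem_span_range_iff_exists_fun ℝ).1 hspan
  refine ⟨∑ x : J, c x • (x : X), fun q => ?_⟩
  have := congrArg (fun L : WeakDual ℝ X →ₗ[ℝ] ℝ => L q) hc
  simp only [LinearMap.coe_sum, Finset.sum_apply, LinearMap.smul_apply, evalLM_apply,
    smul_eq_mul, ContinuousLinearMap.coe_coe] at this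
  rw [← this, map_sum]
  simp [map_smul]

lemma conj_le_coe {f : X → EReal} {q : WeakDual ℝ X} {M : ℝ} :
    conjFn f q ≤ (M : EReal) ↔ ∀ x, (q x : EReal) - f x ≤ (M : EReal) := iSup_le_iff

lemma mem_domConj_iff {f : X → EReal} {q : WeakDual ℝ X} :
    q ∈ domFn (conjFn f) ↔ ∃ M : ℝ, ∀ x, (q x : EReal) - f x ≤ (M : EReal) := by
  constructor
  · intro hq
    have hq' : conjFn f q < ⊤ := hq
    rcases eq_or_ne (conjFn f q) ⊥ with h | h
    · exact ⟨0, fun x => le_trans (le_trans (le_iSup (fun x => (q x : EReal) - f x) x) h.le) bot_le⟩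
    · refine ⟨(conjFn f q).toReal, fun x => ?_⟩
      rw [EReal.coe_toReal hq'.ne h]
      exact le_iSup (fun x => (q x : EReal) - f x) x
  · rintro ⟨M, hM⟩
    exact lt_of_le_of_lt (iSup_le hM) (EReal.coe_lt_top M)

lemma term_eq_coe {f : X → EReal} {q : WeakDual ℝ X} {x : X} {r : ℝ}
    (h : f x = (r : EReal)) : (q x : EReal) - f x = ((q x - r : ℝ) : EReal) := by
  rw [h, EReal.coe_sub]

lemma isClosed_epi {f : X → EReal} (hf : LowerSemicontinuous f) : IsClosed (epiFn f) := by
  have h1 : IsClosed {p : X × EReal | f p.1 ≤ p.2} := hf.isClosed_epigraph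
  have h2 : Continuous (fun p : X × ℝ => ((p.1, (p.2 : EReal)) : X × EReal)) :=
    continuous_fst.prodMk (continuous_coe_real_ereal.comp continuous_snd)
  exact h1.preimage h2

variable [IsTopologicalAddGroup X] [ContinuousSMul ℝ X] [LocallyConvexSpace ℝ X]

/-- separation of a point strictly below the epigraph -/
lemma sep_epi {f : X → EReal} (hconv : Convex ℝ (epiFn f)) (hlsc : LowerSemicontinuous f)
    {z : X} {r : ℝ} (hzr : ¬ f z ≤ (r : EReal)) :
    ∃ (g : X →L[ℝ] ℝ) (s u : ℝ), (∀ (x : X) (ρ : ℝ), f x ≤ (ρ : EReal) → g x + ρ * s < u) ∧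
      u < g z + r * s := by
  obtain ⟨φ, u, h1, h2⟩ :=
    geometric_hahn_banach_closed_point (E := X × ℝ) hconv (isClosed_epi hlsc) (show (z, r) ∉ epiFn f from hzr)
  have hdec : ∀ x : X, ∀ ρ : ℝ, φ (x, ρ) = φ (x, 0) + ρ * φ (0, 1) := by
    intro x ρ
    have : ((x, ρ) : X × ℝ) = (x, 0) + ρ • ((0 : X), (1 : ℝ)) := by
      simp [Prod.ext_iff]
    rw [this, map_add, map_smul, smul_eq_mul]
  refine ⟨φ.comp (ContinuousLinearMap.inl ℝ X ℝ), φ (0, 1), u, fun x ρ hx => ?_, ?_⟩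
  · have := h1 (x, ρ) hx
    rwa [hdec x ρ] at this
  · have := h2
    rwa [hdec z r] at this

/-- from a non-vertical separating functional to an element of `dom f*` -/
lemma mk_dom {f : X → EReal} (g : X →L[ℝ] ℝ) (s u : ℝ) (hs : s < 0)
    (hsep : ∀ (x : X) (ρ : ℝ), f x ≤ (ρ : EReal) → g x + ρ * s < u) :
    ∃ q : WeakDual ℝ X, (∀ x, q x = (-s)⁻¹ * g x) ∧ q ∈ domFn (conjFn f) := by
  have hspos : 0 < -s := neg_pos.2 hs
  refine ⟨toWD ((-s)⁻¹ • g), fun x => rfl, mem_domConj_iff.2 ⟨(-s)⁻¹ * u, fun x => ?_⟩⟩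
  rcases eq_or_ne (f x) ⊤ with h | h
  · rw [h, EReal.sub_top]; exact bot_le
  rcases eq_or_ne (f x) ⊥ with h' | h'
  · -- f x = ⊥ : then f x ≤ ρ for every ρ, so g x + ρ s < u for all ρ; fine, but we can
    -- also directly bound since (q x : EReal) - ⊥ = ⊤?  Need to rule this out via hsep.
    -- from f x ≤ ρ for all ρ: g x + ρ s < u for all ρ, ok since s<0 as ρ → -∞?? no, ρ→-∞
    -- makes ρ s → +∞; contradiction.
    exfalso
    have h1 := hsep x ((u - g x) / s) (h' ▸ bot_le)
    have h2 : (u - g x) / s * s = u - g x := div_mul_cancel₀ _ (ne_of_lt hs)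
    rw [h2] at h1
    linarith
  · have hr : f x = ((f x).toReal : EReal) := (EReal.coe_toReal h h').symm
    set r := (f x).toReal
    rw [term_eq_coe hr, EReal.coe_le_coe_iff]
    have h1 := hsep x r hr.le
    have hq : toWD ((-s)⁻¹ • g) x = (-s)⁻¹ * g x := rfl
    rw [hq]
    have h2 : (-s)⁻¹ * s = -1 := by rw [inv_mul_eq_div, div_neg, div_self (ne_of_lt hs)]
    have h3 : (-s)⁻¹ * (g x + r * s) = (-s)⁻¹ * g x + ((-s)⁻¹ * s) * r := by ring
    have h4 := mul_lt_mul_of_pos_left h1 (inv_pos.2 hspos)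
    rw [h3, h2] at h4
    linarith

/-- `dom f*` is nonempty for proper lsc convex `f` -/
lemma exists_dom {f : X → EReal} (hf : InGamma f) : ∃ q : WeakDual ℝ X, q ∈ domFn (conjFn f) := by
  obtain ⟨hbot, ⟨x₀, hx₀⟩, hconv, hlsc⟩ := hf
  have hr : f x₀ = ((f x₀).toReal : EReal) := (EReal.coe_toReal hx₀ (hbot x₀)).symm
  set m := (f x₀).toReal
  have hzr : ¬ f x₀ ≤ ((m - 1 : ℝ) : EReal) := by
    rw [hr]
    intro h
    rw [EReal.coe_le_coe_iff] at h
    linarith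
  obtain ⟨g, s, u, hsep, hgz⟩ := sep_epi hconv hlsc hzr
  have hs : s < 0 := by
    have h1 := hsep x₀ m hr.le
    nlinarith
  obtain ⟨q, -, hq⟩ := mk_dom g s u hs hsep
  exact ⟨q, hq⟩

/-- the key recession lemma -/
lemma recession {f : X → EReal} (hf : InGamma f) {d : X}
    (hd : ∀ q ∈ domFn (conjFn f), q d ≤ 0) {x₀ : X} (h0 : f x₀ ≤ 0) {t : ℝ} (ht : 0 ≤ t) :
    f (x₀ + t • d) ≤ 0 := by
  by_contra hz
  obtain ⟨hbot, hproper, hconv, hlsc⟩ := hf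
  rcases eq_or_lt_of_le ht with rfl | htpos
  · rw [zero_smul, add_zero] at hz; exact hz h0
  set z := x₀ + t • d with hzdef
  have hzr : ¬ f z ≤ ((0 : ℝ) : EReal) := by rwa [EReal.coe_zero]
  obtain ⟨g, s, u, hsep, hgz⟩ := sep_epi hconv hlsc hzr
  rw [zero_mul, add_zero] at hgz
  have h00 : f x₀ ≤ ((0 : ℝ) : EReal) := by rwa [EReal.coe_zero]
  have hs : s ≤ 0 := by
    by_contra hspos
    push_neg at hspos
    have hρ : (0 : ℝ) ≤ (|u - g x₀| + 1) / s := div_nonneg (by positivity) hspos.le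
    have h1 := hsep x₀ ((|u - g x₀| + 1) / s)
      (le_trans h00 (EReal.coe_le_coe_iff.2 hρ))
    rw [div_mul_cancel₀ _ (ne_of_gt hspos)] at h1
    have := le_abs_self (u - g x₀)
    linarith
  have hu0 : g x₀ < u := by
    have := hsep x₀ 0 h00
    linarith [this]
  have hgd : 0 < g d := by
    have hz' : g z = g x₀ + t * g d := by
      rw [hzdef, map_add, map_smul, smul_eq_mul]
    nlinarith
  rcases hs.lt_or_eq with hslt | hseq
  · obtain ⟨q, hqx, hq⟩ := mk_dom g s u hslt hsep
    have := hd q hq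
    rw [hqx d] at this
    nlinarith [inv_pos.2 (neg_pos.2 hslt)]
  · obtain ⟨q₀, hq₀⟩ := exists_dom ⟨hbot, hproper, hconv, hlsc⟩
    obtain ⟨M, hM⟩ := mem_domConj_iff.1 hq₀
    set lam := (|q₀ d| + 1) / g d with hlam
    have hlam0 : 0 ≤ lam := div_nonneg (by positivity) hgd.le
    set q := q₀ + toWD (lam • g) with hqdef
    have hqmem : q ∈ domFn (conjFn f) := by
      refine mem_domConj_iff.2 ⟨M + lam * u, fun x => ?_⟩
      rcases eq_or_ne (f x) ⊤ with h | h
      · rw [h, EReal.sub_top]; exact bot_le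
      · have hr : f x = ((f x).toReal : EReal) := (EReal.coe_toReal h (hbot x)).symm
        set r := (f x).toReal
        rw [term_eq_coe hr, EReal.coe_le_coe_iff]
        have hgx : g x < u := by
          have := hsep x r hr.le
          rw [hseq, mul_zero, add_zero] at this
          exact this
        have hq0x : q₀ x - r ≤ M := by
          have := hM x
          rw [term_eq_coe hr, EReal.coe_le_coe_iff] at this
          exact this
        have hqx : q x = q₀ x + lam * g x := rfl
        nlinarith [mul_le_mul_of_nonneg_left hgx.le hlam0]
    have hcontra := hd q hqmem
    have hqd : q d = q₀ d + lam * g d := rfl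
    rw [hqd, hlam, div_mul_cancel₀ _ (ne_of_gt hgd)] at hcontra
    have := le_abs_self (-(q₀ d))
    rw [abs_neg] at this
    linarith

omit [IsTopologicalAddGroup X] [ContinuousSMul ℝ X] [LocallyConvexSpace ℝ X] in
lemma mem_barCone_iff {B : Set X} {p : WeakDual ℝ X} :
    p ∈ barCone B ↔ ∃ M : ℝ, ∀ x ∈ B, p x ≤ M := by
  rw [barCone, mem_domConj_iff]
  constructor
  · rintro ⟨M, hM⟩
    refine ⟨M, fun x hx => ?_⟩
    have := hM x
    rw [indicatorE, if_pos hx, sub_zero, EReal.coe_le_coe_iff] at this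
    exact this
  · rintro ⟨M, hM⟩
    refine ⟨M, fun x => ?_⟩
    by_cases hx : x ∈ B
    · rw [indicatorE, if_pos hx, sub_zero, EReal.coe_le_coe_iff]
      exact hM x hx
    · rw [indicatorE, if_neg hx, EReal.sub_top]
      exact bot_le

section ConeGen
variable {V : Type*} [AddCommGroup V] [Module ℝ V]

lemma coneGen_zero_mem (D : Set V) : (0 : V) ∈ coneGen D := Or.inl rfl

lemma smul_mem_coneGen {D : Set V} {t : ℝ} (ht : 0 ≤ t) {y : V} (hy : y ∈ coneGen D) :
    t • y ∈ coneGen D := by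
  rcases hy with rfl | ⟨t', ht', x, hx, rfl⟩
  · rw [smul_zero]; exact coneGen_zero_mem D
  · exact Or.inr ⟨t * t', mul_nonneg ht ht', x, hx, smul_smul t t' x⟩

lemma mem_coneGen_of_mem {D : Set V} {y : V} (hy : y ∈ D) : y ∈ coneGen D :=
  Or.inr ⟨1, zero_le_one, y, subset_convexHull ℝ D hy, (one_smul ℝ y).symm⟩

lemma coneGen_convex (D : Set V) : Convex ℝ (coneGen D) := by
  intro y₁ hy₁ y₂ hy₂ a b ha hb hab
  have key : ∀ (t₁ t₂ : ℝ), 0 ≤ t₁ → 0 ≤ t₂ → ∀ x₁ ∈ convexHull ℝ D, ∀ x₂ ∈ convexHull ℝ D,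
      t₁ • x₁ + t₂ • x₂ ∈ coneGen D := by
    intro t₁ t₂ ht₁ ht₂ x₁ hx₁ x₂ hx₂
    rcases eq_or_lt_of_le (add_nonneg ht₁ ht₂) with hc | hc
    · have h1 : t₁ = 0 := by linarith
      have h2 : t₂ = 0 := by linarith
      rw [h1, h2, zero_smul, zero_smul, add_zero]
      exact coneGen_zero_mem D
    · set c := t₁ + t₂
      refine Or.inr ⟨c, hc.le, (t₁ / c) • x₁ + (t₂ / c) • x₂, ?_, ?_⟩
      · exact (convex_convexHull ℝ D) hx₁ hx₂ (div_nonneg ht₁ hc.le) (div_nonneg ht₂ hc.le)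
          (by field_simp; rfl)
      · rw [smul_add, smul_smul, smul_smul, mul_div_cancel₀ _ (ne_of_gt hc),
          mul_div_cancel₀ _ (ne_of_gt hc)]
  rcases hy₁ with rfl | ⟨t₁, ht₁, x₁, hx₁, rfl⟩
  · rcases hy₂ with rfl | ⟨t₂, ht₂, x₂, hx₂, rfl⟩
    · rw [smul_zero, smul_zero, add_zero]; exact coneGen_zero_mem D
    · rw [smul_zero, zero_add, smul_smul]
      exact Or.inr ⟨b * t₂, mul_nonneg hb ht₂, x₂, hx₂, rfl⟩
  · rcases hy₂ with rfl | ⟨t₂, ht₂, x₂, hx₂, rfl⟩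
    · rw [smul_zero, add_zero, smul_smul]
      exact Or.inr ⟨a * t₁, mul_nonneg ha ht₁, x₁, hx₁, rfl⟩
    · rw [smul_smul, smul_smul]
      exact key _ _ (mul_nonneg ha ht₁) (mul_nonneg hb ht₂) x₁ hx₁ x₂ hx₂

lemma coneGen_subset {D S : Set V} (h0 : (0 : V) ∈ S) (hconv : Convex ℝ S)
    (hsmul : ∀ t : ℝ, 0 ≤ t → ∀ x ∈ S, t • x ∈ S) (hDS : D ⊆ S) : coneGen D ⊆ S := by
  rintro y (rfl | ⟨t, ht, x, hx, rfl⟩)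
  · exact h0
  · exact hsmul t ht x (convexHull_min hDS hconv hx)

end ConeGen

end AuxLemmas

/-- Lemma 1(ii): `w*-cl (barr B) = w*-cl cone (⋃ i, dom f_i*)` whenever `B ≠ ∅`. -/
theorem stmt1 [IsTopologicalAddGroup X] [ContinuousSMul ℝ X] [LocallyConvexSpace ℝ X] [T2Space X] {I : Type*} (f : I → X → EReal)
    (hf : ∀ i, InGamma (f i))
    (hB : {x : X | ∀ i, f i x ≤ (0 : EReal)}.Nonempty) :
    closure (barCone {x : X | ∀ i, f i x ≤ (0 : EReal)}) =
      closure (coneGen (⋃ i, domFn (conjFn (f i)))) := by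
  obtain ⟨x₀, hx₀⟩ := hB
  set B := {x : X | ∀ i, f i x ≤ (0 : EReal)} with hBdef
  set S := ⋃ i, domFn (conjFn (f i)) with hSdef
  -- easy inclusion: S ⊆ barCone B
  have hSbar : S ⊆ barCone B := by
    intro q hq
    rw [hSdef, Set.mem_iUnion] at hq
    obtain ⟨i, hqi⟩ := hq
    obtain ⟨M, hM⟩ := mem_domConj_iff.1 hqi
    refine mem_barCone_iff.2 ⟨M, fun x hx => ?_⟩
    have h1 := hM x
    have hfx : f i x ≤ 0 := hx i
    have hne : f i x ≠ ⊥ := (hf i).1 x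
    have hnetop : f i x ≠ ⊤ := by
      intro h
      rw [h] at hfx
      exact absurd hfx (by simp)
    have hr : f i x = ((f i x).toReal : EReal) := (EReal.coe_toReal hnetop hne).symm
    have hr0 : (f i x).toReal ≤ 0 := by
      rw [hr, ← EReal.coe_zero, EReal.coe_le_coe_iff] at hfx
      exact hfx
    rw [term_eq_coe hr, EReal.coe_le_coe_iff] at h1
    linarith
  -- barCone B is a convex cone containing 0
  have h0bar : (0 : WeakDual ℝ X) ∈ barCone B :=
    mem_barCone_iff.2 ⟨0, fun x _ => le_of_eq rfl⟩
  have hconvbar : Convex ℝ (barCone B) := by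
    intro p₁ hp₁ p₂ hp₂ a b ha hb hab
    obtain ⟨M₁, hM₁⟩ := mem_barCone_iff.1 hp₁
    obtain ⟨M₂, hM₂⟩ := mem_barCone_iff.1 hp₂
    refine mem_barCone_iff.2 ⟨a * M₁ + b * M₂, fun x hx => ?_⟩
    have he : (a • p₁ + b • p₂) x = a * p₁ x + b * p₂ x := rfl
    rw [he]
    have := hM₁ x hx
    have := hM₂ x hx
    nlinarith [mul_le_mul_of_nonneg_left (hM₁ x hx) ha, mul_le_mul_of_nonneg_left (hM₂ x hx) hb]
  have hsmulbar : ∀ t : ℝ, 0 ≤ t → ∀ p ∈ barCone B, t • p ∈ barCone B := by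
    intro t ht p hp
    obtain ⟨M, hM⟩ := mem_barCone_iff.1 hp
    refine mem_barCone_iff.2 ⟨t * M, fun x hx => ?_⟩
    have he : (t • p) x = t * p x := rfl
    rw [he]
    exact mul_le_mul_of_nonneg_left (hM x hx) ht
  -- hard inclusion
  have hhard : barCone B ⊆ closure (coneGen S) := by
    intro p hp
    by_contra hpK
    obtain ⟨φ, u, h1, h2⟩ := geometric_hahn_banach_closed_point
      ((coneGen_convex S).closure) isClosed_closure hpK
    obtain ⟨d, hd⟩ := weakdual_eval φ
    have hu0 : 0 < u := by
      have := h1 0 (subset_closure (coneGen_zero_mem S))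
      rwa [map_zero] at this
    have hqd : ∀ q ∈ S, q d ≤ 0 := by
      intro q hq
      by_contra hpos
      push_neg at hpos
      have hmem : ∀ t : ℝ, 0 ≤ t → φ (t • q) < u := fun t ht =>
        h1 _ (subset_closure (smul_mem_coneGen ht (mem_coneGen_of_mem hq)))
      have h3 := hmem (u / q d) (div_nonneg hu0.le hpos.le)
      rw [hd] at h3
      have h4 : ((u / q d) • q) d = (u / q d) * q d := rfl
      rw [h4, div_mul_cancel₀ _ (ne_of_gt hpos)] at h3
      exact lt_irrefl u h3
    have hrec : ∀ t : ℝ, 0 ≤ t → (x₀ + t • d) ∈ B := by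
      intro t ht i
      exact recession (hf i) (fun q hq => hqd q (Set.mem_iUnion.2 ⟨i, hq⟩)) (hx₀ i) ht
    obtain ⟨M, hM⟩ := mem_barCone_iff.1 hp
    have hpd : 0 < p d := by
      rw [hd p] at h2
      linarith
    set t := (|M - p x₀| + 1) / p d with htdef
    have ht0 : 0 ≤ t := div_nonneg (by positivity) hpd.le
    have hcontr := hM _ (hrec t ht0)
    have hpe : p (x₀ + t • d) = p x₀ + t * p d := by
      rw [map_add, map_smul, smul_eq_mul]
    rw [hpe, htdef, div_mul_cancel₀ _ (ne_of_gt hpd)] at hcontr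
    have := le_abs_self (M - p x₀)
    linarith
  apply Set.Subset.antisymm
  · exact closure_minimal hhard isClosed_closure
  · exact closure_mono (coneGen_subset h0bar hconvbar hsmulbar hSbar)
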